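/- Let N = ℝ³ × ℝ³ × M₃(ℝ) (coordinates (ν, n, j), identified with ℝ¹⁵ with Lebesgue measure). Let a : ℝ × ℝ³ × N → ℝ³ be C¹, and let φ : ℝ × ℝ³ × N → ℝ be C¹ such that for every compact K ⊆ ℝ × ℝ³ there is a compact C ⊆ N containing the support of φ(t, x, ·) for all (t, x) ∈ K. Suppose φ satisfies the kinetic equation ∂φ/∂t + (ν × σ(n)) · ∇_x φ + (ν × n) · ∇_n φ + Tr((∂φ/∂j)ᵀ [ν̂, j]) + div_ν(φ a) = 0 everywhere, where ∂φ/∂j is the matrix of partial derivatives of φ with respect to the entries of j and div_ν(φ a) = Σ_i ∂(φ a_i)/∂ν_i. Let q : N → ℝ be C¹ and suppose ∇_n q · (ν × n) + ∇_ν q · a(t, x, ν, n, j) + Tr((∂q/∂j)ᵀ [ν̂, j]) = 0 for all (t, x, ν, n, j). Then Q(t, x) := ∫_N q(ν, n, j) φ(t, x, ν, n, j) dν dn dj satisfies the continuity equation ∂Q/∂t + div_x ∫_N q φ (ν × σ(n)) dν dn dj = 0 at every (t, x). -/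

import Mathlib

open Matrix MeasureTheory BigOperators

/-- Levi-Civita symbol on three indices, `eps 0 1 2 = 1`. -/
noncomputable def eps (i j k : Fin 3) : ℝ :=
  (((j : ℕ) : ℝ) - ((i : ℕ) : ℝ)) * (((k : ℕ) : ℝ) - ((j : ℕ) : ℝ)) *
    (((k : ℕ) : ℝ) - ((i : ℕ) : ℝ)) / 2

/-- The hat map: `(hat ν) j k = -∑ l, ε_{jkl} ν l`, so that `hat ν *ᵥ w = ν × w`. -/
noncomputable def hat (ν : Fin 3 → ℝ) : Matrix (Fin 3) (Fin 3) ℝ :=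
  Matrix.of fun j k => -(∑ l, eps j k l * ν l)

/-- The internal phase space `N = ℝ³ × ℝ³ × M₃(ℝ)` with coordinates `(ν, n, j)`. -/
abbrev NSpace := (Fin 3 → ℝ) × (Fin 3 → ℝ) × (Fin 3 → Fin 3 → ℝ)

abbrev E3 := Fin 3 → ℝ
abbrev M3 := Fin 3 → Fin 3 → ℝ

instance : (volume : Measure (Fin 3 → ℝ)).IsAddHaarMeasure := isAddHaarMeasure_volume_pi (Fin 3)
instance : (volume : Measure ((Fin 3 → ℝ) × (Fin 3 → Fin 3 → ℝ))).IsAddHaarMeasure :=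
  Measure.prod.instIsAddHaarMeasure _ _
instance : (volume : Measure NSpace).IsAddHaarMeasure :=
  Measure.prod.instIsAddHaarMeasure _ _

namespace MomAux

/-- coordinate CLMs -/
noncomputable def L1 (k : Fin 3) : NSpace →L[ℝ] ℝ :=
  (ContinuousLinearMap.proj k).comp (ContinuousLinearMap.fst ℝ E3 (E3 × M3))
noncomputable def L2 (k : Fin 3) : NSpace →L[ℝ] ℝ :=
  (ContinuousLinearMap.proj k).comp ((ContinuousLinearMap.fst ℝ E3 M3).comp
    (ContinuousLinearMap.snd ℝ E3 (E3 × M3)))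
noncomputable def L3 (k l : Fin 3) : NSpace →L[ℝ] ℝ :=
  ((ContinuousLinearMap.proj l).comp (ContinuousLinearMap.proj (R := ℝ) (φ := fun _ : Fin 3 => E3) k)).comp
    ((ContinuousLinearMap.snd ℝ E3 M3).comp (ContinuousLinearMap.snd ℝ E3 (E3 × M3)))

@[simp] lemma L1_apply (k : Fin 3) (p : NSpace) : L1 k p = p.1 k := rfl
@[simp] lemma L2_apply (k : Fin 3) (p : NSpace) : L2 k p = p.2.1 k := rfl
@[simp] lemma L3_apply (k l : Fin 3) (p : NSpace) : L3 k l p = p.2.2 k l := rfl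

/-- basis directions -/
noncomputable def eν (i : Fin 3) : NSpace := (Pi.single i 1, 0, 0)
noncomputable def en (i : Fin 3) : NSpace := (0, Pi.single i 1, 0)
noncomputable def ej (k l : Fin 3) : NSpace := (0, 0, Pi.single k (Pi.single l 1))

lemma e3_decomp (v : E3) : v = ∑ i, v i • (Pi.single i 1 : E3) := by
  funext a
  simp [Finset.sum_apply, Pi.single_apply, Finset.sum_ite_eq]

lemma m3_decomp (w : M3) : w = ∑ k, ∑ l, w k l • (Pi.single k (Pi.single l 1) : M3) := by
  funext a b
  simp [Finset.sum_apply, Pi.single_apply, apply_ite (fun f : Fin 3 → ℝ => f b),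
    mul_ite, Finset.sum_ite_eq]

lemma clm_decomp (L : NSpace →L[ℝ] ℝ) (w : NSpace) :
    L w = ∑ i, w.1 i * L (eν i) + ∑ i, w.2.1 i * L (en i)
      + ∑ k, ∑ l, w.2.2 k l * L (ej k l) := by
  have hw : w = (∑ i, w.1 i • eν i) + (∑ i, w.2.1 i • en i)
      + ∑ k, ∑ l, w.2.2 k l • ej k l := by
    refine Prod.ext ?_ (Prod.ext ?_ ?_)
    · simp [eν, en, ej, Prod.fst_sum, Prod.snd_sum]
      exact e3_decomp w.1
    · simp [eν, en, ej, Prod.fst_sum, Prod.snd_sum]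
      exact e3_decomp w.2.1
    · simp [eν, en, ej, Prod.fst_sum, Prod.snd_sum]
      exact m3_decomp w.2.2
  conv_lhs => rw [hw]
  simp only [map_add, map_sum, ContinuousLinearMap.map_smul, smul_eq_mul]


/-! ### cross product and commutator coordinate functions -/

lemma cross_eq (a b : E3) (i : Fin 3) :
    crossProduct a b i = a (i+1) * b (i+2) - a (i+2) * b (i+1) := by
  fin_cases i <;> simp [crossProduct]

/-- `m1 i p = (ν × n) i` -/
noncomputable def m1 (i : Fin 3) (p : NSpace) : ℝ := crossProduct p.1 p.2.1 i

noncomputable def D1 (i : Fin 3) (p : NSpace) : NSpace →L[ℝ] ℝ :=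
  (L1 (i+1) p • L2 (i+2) + L2 (i+2) p • L1 (i+1))
    - (L1 (i+2) p • L2 (i+1) + L2 (i+1) p • L1 (i+2))

lemma m1_hasFDerivAt (i : Fin 3) (p : NSpace) : HasFDerivAt (m1 i) (D1 i p) p := by
  have h := (((L1 (i+1)).hasFDerivAt (x := p)).mul ((L2 (i+2)).hasFDerivAt)).sub
    (((L1 (i+2)).hasFDerivAt (x := p)).mul ((L2 (i+1)).hasFDerivAt))
  convert h using 1
  any_goals rfl
  funext z; simp [m1, cross_eq]

lemma m1_differentiable (i : Fin 3) : Differentiable ℝ (m1 i) :=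
  fun p => (m1_hasFDerivAt i p).differentiableAt

lemma m1_fderiv_en (i : Fin 3) (p : NSpace) : fderiv ℝ (m1 i) p (en i) = 0 := by
  rw [(m1_hasFDerivAt i p).fderiv]
  fin_cases i <;>
    simp [D1, en, Pi.single_apply]

/-- `m2 k l p = [ν̂, j] k l` -/
noncomputable def m2 (k l : Fin 3) (p : NSpace) : ℝ :=
  (hat p.1 * Matrix.of p.2.2 - Matrix.of p.2.2 * hat p.1) k l

noncomputable def Lhat (k m : Fin 3) : NSpace →L[ℝ] ℝ := -(∑ l', eps k m l' • L1 l')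

@[simp] lemma Lhat_apply (k m : Fin 3) (p : NSpace) : Lhat k m p = hat p.1 k m := by
  simp [Lhat, hat]

noncomputable def D2 (k l : Fin 3) (p : NSpace) : NSpace →L[ℝ] ℝ :=
  (∑ m, (Lhat k m p • L3 m l + L3 m l p • Lhat k m))
    - ∑ m, (L3 k m p • Lhat m l + Lhat m l p • L3 k m)

lemma m2_hasFDerivAt (k l : Fin 3) (p : NSpace) : HasFDerivAt (m2 k l) (D2 k l p) p := by
  have h := (HasFDerivAt.sum (fun m (_ : m ∈ Finset.univ) =>
      ((Lhat k m).hasFDerivAt (x := p)).mul ((L3 m l).hasFDerivAt))).sub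
    (HasFDerivAt.sum (fun m (_ : m ∈ Finset.univ) =>
      ((L3 k m).hasFDerivAt (x := p)).mul ((Lhat m l).hasFDerivAt)))
  convert h using 1
  all_goals rfl

lemma m2_differentiable (k l : Fin 3) : Differentiable ℝ (m2 k l) :=
  fun p => (m2_hasFDerivAt k l p).differentiableAt

lemma hat_diag (ν : E3) (k : Fin 3) : hat ν k k = 0 := by
  simp [hat, eps]

lemma m2_fderiv_ej (k l : Fin 3) (p : NSpace) : fderiv ℝ (m2 k l) p (ej k l) = 0 := by
  rw [(m2_hasFDerivAt k l p).fderiv]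
  have h1 : ∀ m, Lhat k m (ej k l) = 0 := by intro m; simp [ej, hat]
  have h2 : ∀ m, Lhat m l (ej k l) = 0 := by intro m; simp [ej, hat]
  simp only [D2, ContinuousLinearMap.sub_apply, ContinuousLinearMap.sum_apply,
    ContinuousLinearMap.add_apply, ContinuousLinearMap.smul_apply, h1, h2,
    smul_eq_mul, mul_zero, add_zero, zero_add, L3_apply, Lhat_apply]
  have h3 : ∀ m : Fin 3, (ej k l).2.2 m l = if m = k then 1 else 0 := by
    intro m; simp [ej, Pi.single_apply, apply_ite (fun f : Fin 3 → ℝ => f l)]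
  have h4 : ∀ m : Fin 3, (ej k l).2.2 k m = if m = l then 1 else 0 := by
    intro m; simp [ej, Pi.single_apply, apply_ite (fun f : Fin 3 → ℝ => f m), eq_comm]
  simp only [h3, h4, mul_ite, mul_one, mul_zero]
  simp [Finset.sum_ite_eq', hat_diag]

/-! ### integral of a derivative vanishes -/

lemma integral_fderiv_apply_eq_zero {h : NSpace → ℝ} (hh : ContDiff ℝ 1 h)
    (hc : HasCompactSupport h) (v : NSpace) : ∫ p, fderiv ℝ h p v = 0 := by
  have key := integral_mul_fderiv_eq_neg_fderiv_mul_of_integrable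
    (μ := (volume : Measure NSpace)) (f := fun _ : NSpace => (1:ℝ)) (g := h) (v := v)
    ?_ ?_ ?_ (fun _ _ => differentiableAt_const 1) (fun x _ => hh.differentiable one_ne_zero x)
  · simpa using key
  · simp
  · have hcont : Continuous fun p => fderiv ℝ h p v :=
      (hh.continuous_fderiv one_ne_zero).clm_apply continuous_const
    have hcs : HasCompactSupport fun p => fderiv ℝ h p v :=
      (hc.fderiv (𝕜 := ℝ)).comp_left (g := fun L : NSpace →L[ℝ] ℝ => L v) rfl
    simpa using hcont.integrable_of_hasCompactSupport hcs
  · simpa using ((hh.differentiable one_ne_zero).continuous).integrable_of_hasCompactSupport hc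


/-! ### generic integration by parts on NSpace -/

lemma ibp {f g : NSpace → ℝ} (v : NSpace) (hf : Differentiable ℝ f)
    (hf' : Continuous fun p => fderiv ℝ f p v)
    (hg : ContDiff ℝ 1 g) (hgc : HasCompactSupport g) :
    ∫ p, f p * fderiv ℝ g p v = - ∫ p, fderiv ℝ f p v * g p := by
  have hgd := hg.differentiable one_ne_zero
  have hgcont := hgd.continuous
  have hgder : Continuous fun p => fderiv ℝ g p v :=
    (hg.continuous_fderiv one_ne_zero).clm_apply continuous_const
  have hgdercs : HasCompactSupport fun p => fderiv ℝ g p v :=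
    (hgc.fderiv (𝕜 := ℝ)).comp_left (g := fun L : NSpace →L[ℝ] ℝ => L v) rfl
  apply integral_mul_fderiv_eq_neg_fderiv_mul_of_integrable
  · exact (hf'.mul hgcont).integrable_of_hasCompactSupport hgc.mul_left
  · exact ((hf.continuous.mul hgder)).integrable_of_hasCompactSupport hgdercs.mul_left
  · exact (hf.continuous.mul hgcont).integrable_of_hasCompactSupport hgc.mul_left
  · exact fun x _ => hf x
  · exact fun x _ => hgd x

/-! ### the key identity on `N` -/

lemma key_N (q ψ : NSpace → ℝ) (b : Fin 3 → NSpace → ℝ)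
    (hq : ContDiff ℝ 1 q) (hψ : ContDiff ℝ 1 ψ) (hψc : HasCompactSupport ψ)
    (hb : ∀ i, ContDiff ℝ 1 (b i))
    (hqd : ∀ p : NSpace,
      fderiv ℝ q p (fun i => b i p, fun i => m1 i p, fun k l => m2 k l p) = 0) :
    ∫ p, (q p * fderiv ℝ ψ p (0, fun i => m1 i p, fun k l => m2 k l p)
      + ∑ i, q p * fderiv ℝ (fun p' => ψ p' * b i p') p (eν i)) = 0 := by
  have hqdiff := hq.differentiable one_ne_zero
  have hqc := hqdiff.continuous
  have hqfv : ∀ v : NSpace, Continuous fun p => fderiv ℝ q p v := fun v =>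
    (hq.continuous_fderiv one_ne_zero).clm_apply continuous_const
  have hψd := hψ.differentiable one_ne_zero
  have hψcont := hψd.continuous
  have hψfv : ∀ v : NSpace, Continuous fun p => fderiv ℝ ψ p v := fun v =>
    (hψ.continuous_fderiv one_ne_zero).clm_apply continuous_const
  have hψfcs : ∀ v : NSpace, HasCompactSupport fun p => fderiv ℝ ψ p v := fun v =>
    (hψc.fderiv (𝕜 := ℝ)).comp_left (g := fun L : NSpace →L[ℝ] ℝ => L v) rfl
  have m1c : ∀ i, Continuous (m1 i) := fun i => (m1_differentiable i).continuous
  have m2c : ∀ k l, Continuous (m2 k l) := fun k l => (m2_differentiable k l).continuous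
  have hψb : ∀ i, ContDiff ℝ 1 (fun p => ψ p * b i p) := fun i => hψ.mul (hb i)
  have hψbc : ∀ i, HasCompactSupport (fun p => ψ p * b i p) := fun i => hψc.mul_right
  have hψbfv : ∀ i (v : NSpace), Continuous fun p => fderiv ℝ (fun p' => ψ p' * b i p') p v :=
    fun i v => ((hψb i).continuous_fderiv one_ne_zero).clm_apply continuous_const
  have hψbfcs : ∀ i (v : NSpace),
      HasCompactSupport fun p => fderiv ℝ (fun p' => ψ p' * b i p') p v := fun i v =>
    (((hψbc i).fderiv (𝕜 := ℝ))).comp_left (g := fun L : NSpace →L[ℝ] ℝ => L v) rfl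
  -- pointwise split of the transport term
  have hsplit : ∀ p, q p * fderiv ℝ ψ p (0, fun i => m1 i p, fun k l => m2 k l p)
      = (∑ i, (q p * m1 i p) * fderiv ℝ ψ p (en i))
        + ∑ k, ∑ l, (q p * m2 k l p) * fderiv ℝ ψ p (ej k l) := by
    intro p
    rw [clm_decomp (fderiv ℝ ψ p) (0, fun i => m1 i p, fun k l => m2 k l p)]
    simp only [Pi.zero_apply, zero_mul, Finset.sum_const_zero, zero_add]
    rw [mul_add, Finset.mul_sum]
    congr 1
    · exact Finset.sum_congr rfl fun i _ => by ring
    · rw [Finset.mul_sum]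
      refine Finset.sum_congr rfl fun k _ => ?_
      rw [Finset.mul_sum]
      exact Finset.sum_congr rfl fun l _ => by ring
  -- integrability of pieces
  have hintB : ∀ i, Integrable (fun p => (q p * m1 i p) * fderiv ℝ ψ p (en i)) volume :=
    fun i => (((hqc.mul (m1c i))).mul (hψfv (en i))).integrable_of_hasCompactSupport
      ((hψfcs (en i)).mul_left)
  have hintC : ∀ k l, Integrable (fun p => (q p * m2 k l p) * fderiv ℝ ψ p (ej k l)) volume :=
    fun k l => (((hqc.mul (m2c k l))).mul (hψfv (ej k l))).integrable_of_hasCompactSupport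
      ((hψfcs (ej k l)).mul_left)
  have hintD : ∀ i, Integrable
      (fun p => q p * fderiv ℝ (fun p' => ψ p' * b i p') p (eν i)) volume := fun i =>
    (hqc.mul (hψbfv i (eν i))).integrable_of_hasCompactSupport ((hψbfcs i (eν i)).mul_left)
  -- IBP for each piece
  have hrwB : ∀ i p, fderiv ℝ (fun p' => q p' * m1 i p') p (en i)
      = m1 i p * fderiv ℝ q p (en i) := by
    intro i p
    rw [fderiv_fun_mul (hqdiff p) (m1_differentiable i p)]
    simp [m1_fderiv_en]
  have hrwC : ∀ k l p, fderiv ℝ (fun p' => q p' * m2 k l p') p (ej k l)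
      = m2 k l p * fderiv ℝ q p (ej k l) := by
    intro k l p
    rw [fderiv_fun_mul (hqdiff p) (m2_differentiable k l p)]
    simp [m2_fderiv_ej]
  have hB : ∀ i, ∫ p, (q p * m1 i p) * fderiv ℝ ψ p (en i)
      = - ∫ p, (m1 i p * fderiv ℝ q p (en i)) * ψ p := by
    intro i
    have h := ibp (f := fun p => q p * m1 i p) (g := ψ) (en i)
      (hqdiff.mul (m1_differentiable i))
      (by simp only [hrwB]; exact (m1c i).mul (hqfv (en i))) hψ hψc
    rw [h]
    congr 1
    exact integral_congr_ae (Filter.Eventually.of_forall fun p => by beta_reduce; rw [hrwB i p])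
  have hC : ∀ k l, ∫ p, (q p * m2 k l p) * fderiv ℝ ψ p (ej k l)
      = - ∫ p, (m2 k l p * fderiv ℝ q p (ej k l)) * ψ p := by
    intro k l
    have h := ibp (f := fun p => q p * m2 k l p) (g := ψ) (ej k l)
      (hqdiff.mul (m2_differentiable k l))
      (by simp only [hrwC]; exact (m2c k l).mul (hqfv (ej k l))) hψ hψc
    rw [h]
    congr 1
    exact integral_congr_ae (Filter.Eventually.of_forall fun p => by beta_reduce; rw [hrwC k l p])
  have hD : ∀ i, ∫ p, q p * fderiv ℝ (fun p' => ψ p' * b i p') p (eν i)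
      = - ∫ p, fderiv ℝ q p (eν i) * (ψ p * b i p) := by
    intro i
    exact ibp (eν i) hqdiff (hqfv (eν i)) (hψb i) (hψbc i)
  -- split the whole integral
  have hint1 : Integrable (fun p =>
      q p * fderiv ℝ ψ p (0, fun i => m1 i p, fun k l => m2 k l p)) volume := by
    simp only [hsplit]
    exact (integrable_finset_sum _ fun i _ => hintB i).add
      (integrable_finset_sum _ fun k _ => integrable_finset_sum _ fun l _ => hintC k l)
  have hint2 : Integrable (fun p =>
      ∑ i, q p * fderiv ℝ (fun p' => ψ p' * b i p') p (eν i)) volume :=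
    integrable_finset_sum _ fun i _ => hintD i
  rw [integral_add hint1 hint2]
  have e1 : ∫ p, q p * fderiv ℝ ψ p (0, fun i => m1 i p, fun k l => m2 k l p)
      = (∑ i, ∫ p, (q p * m1 i p) * fderiv ℝ ψ p (en i))
        + ∑ k, ∑ l, ∫ p, (q p * m2 k l p) * fderiv ℝ ψ p (ej k l) := by
    rw [integral_congr_ae (Filter.Eventually.of_forall hsplit)]
    rw [integral_add (integrable_finset_sum _ fun i _ => hintB i)
      (integrable_finset_sum _ fun k _ => integrable_finset_sum _ fun l _ => hintC k l)]
    rw [integral_finset_sum _ fun i _ => hintB i]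
    congr 1
    rw [integral_finset_sum _ fun k _ => integrable_finset_sum _ fun l _ => hintC k l]
    exact Finset.sum_congr rfl fun k _ => integral_finset_sum _ fun l _ => hintC k l
  have e2 : ∫ p, ∑ i, q p * fderiv ℝ (fun p' => ψ p' * b i p') p (eν i)
      = ∑ i, ∫ p, q p * fderiv ℝ (fun p' => ψ p' * b i p') p (eν i) :=
    integral_finset_sum _ fun i _ => hintD i
  rw [e1, e2]
  simp only [hB, hC, hD]
  -- recombine into a single integral
  have hintB' : ∀ i, Integrable (fun p => (m1 i p * fderiv ℝ q p (en i)) * ψ p) volume :=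
    fun i => (((m1c i).mul (hqfv (en i))).mul hψcont).integrable_of_hasCompactSupport
      hψc.mul_left
  have hintC' : ∀ k l, Integrable (fun p => (m2 k l p * fderiv ℝ q p (ej k l)) * ψ p) volume :=
    fun k l => (((m2c k l).mul (hqfv (ej k l))).mul hψcont).integrable_of_hasCompactSupport
      hψc.mul_left
  have hintD' : ∀ i, Integrable (fun p => fderiv ℝ q p (eν i) * (ψ p * b i p)) volume :=
    fun i => ((hqfv (eν i)).mul (hψcont.mul (hb i).continuous)).integrable_of_hasCompactSupport
      ((hψc.mul_right).mul_left)
  have g1 : (∑ x, -∫ p, m1 x p * fderiv ℝ q p (en x) * ψ p)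
      = ∫ p, ∑ x : Fin 3, -(m1 x p * fderiv ℝ q p (en x) * ψ p) := by
    rw [integral_finset_sum (f := fun (i : Fin 3) p => -(m1 i p * fderiv ℝ q p (en i) * ψ p))
      Finset.univ (fun i _ => (hintB' i).neg)]
    exact Finset.sum_congr rfl fun i _ => (integral_neg _).symm
  have g2 : (∑ k, ∑ l, -∫ p, m2 k l p * fderiv ℝ q p (ej k l) * ψ p)
      = ∫ p, ∑ k : Fin 3, ∑ l : Fin 3, -(m2 k l p * fderiv ℝ q p (ej k l) * ψ p) := by
    rw [integral_finset_sum
      (f := fun (k : Fin 3) p => ∑ l : Fin 3, -(m2 k l p * fderiv ℝ q p (ej k l) * ψ p))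
      Finset.univ (fun k _ => integrable_finset_sum _ fun l _ => (hintC' k l).neg)]
    refine Finset.sum_congr rfl fun k _ => ?_
    rw [integral_finset_sum (f := fun (l : Fin 3) p => -(m2 k l p * fderiv ℝ q p (ej k l) * ψ p))
      Finset.univ (fun l _ => (hintC' k l).neg)]
    exact Finset.sum_congr rfl fun l _ => (integral_neg _).symm
  have g3 : (∑ x, -∫ p, fderiv ℝ q p (eν x) * (ψ p * b x p))
      = ∫ p, ∑ x : Fin 3, -(fderiv ℝ q p (eν x) * (ψ p * b x p)) := by
    rw [integral_finset_sum (f := fun (i : Fin 3) p => -(fderiv ℝ q p (eν i) * (ψ p * b i p)))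
      Finset.univ (fun i _ => (hintD' i).neg)]
    exact Finset.sum_congr rfl fun i _ => (integral_neg _).symm
  have hS1 : Integrable (fun p => ∑ x : Fin 3, -(m1 x p * fderiv ℝ q p (en x) * ψ p)) volume :=
    integrable_finset_sum _ fun i _ => (hintB' i).neg
  have hS2 : Integrable (fun p =>
      ∑ k : Fin 3, ∑ l : Fin 3, -(m2 k l p * fderiv ℝ q p (ej k l) * ψ p)) volume :=
    integrable_finset_sum _ fun k _ => integrable_finset_sum _ fun l _ => (hintC' k l).neg
  have hS3 : Integrable (fun p => ∑ x : Fin 3, -(fderiv ℝ q p (eν x) * (ψ p * b x p))) volume :=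
    integrable_finset_sum _ fun i _ => (hintD' i).neg
  have hS12 : Integrable (fun p =>
      (∑ x : Fin 3, -(m1 x p * fderiv ℝ q p (en x) * ψ p))
        + ∑ k : Fin 3, ∑ l : Fin 3, -(m2 k l p * fderiv ℝ q p (ej k l) * ψ p)) volume :=
    hS1.add hS2
  rw [g1, g2, g3, ← integral_add hS1 hS2, ← integral_add hS12 hS3]
  have hpt : ∀ p : NSpace,
      ((∑ x : Fin 3, -(m1 x p * fderiv ℝ q p (en x) * ψ p))
        + ∑ k : Fin 3, ∑ l : Fin 3, -(m2 k l p * fderiv ℝ q p (ej k l) * ψ p))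
        + ∑ x : Fin 3, -(fderiv ℝ q p (eν x) * (ψ p * b x p)) = 0 := by
    intro p
    have hdec := clm_decomp (fderiv ℝ q p) (fun i => b i p, fun i => m1 i p, fun k l => m2 k l p)
    rw [hqd p] at hdec
    have t1 : ∑ x : Fin 3, -(m1 x p * fderiv ℝ q p (en x) * ψ p)
        = -((∑ i, m1 i p * fderiv ℝ q p (en i)) * ψ p) := by
      rw [Finset.sum_mul, ← Finset.sum_neg_distrib]
    have t2 : ∑ k : Fin 3, ∑ l : Fin 3, -(m2 k l p * fderiv ℝ q p (ej k l) * ψ p)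
        = -((∑ k, ∑ l, m2 k l p * fderiv ℝ q p (ej k l)) * ψ p) := by
      rw [Finset.sum_mul, ← Finset.sum_neg_distrib]
      refine Finset.sum_congr rfl fun k _ => ?_
      rw [Finset.sum_mul, ← Finset.sum_neg_distrib]
    have t3 : ∑ x : Fin 3, -(fderiv ℝ q p (eν x) * (ψ p * b x p))
        = -((∑ i, b i p * fderiv ℝ q p (eν i)) * ψ p) := by
      rw [Finset.sum_mul, ← Finset.sum_neg_distrib]
      exact Finset.sum_congr rfl fun x _ => by ring
    rw [t1, t2, t3]
    have : ((∑ i, b i p * fderiv ℝ q p (eν i)) + (∑ i, m1 i p * fderiv ℝ q p (en i))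
        + ∑ k, ∑ l, m2 k l p * fderiv ℝ q p (ej k l)) = 0 := hdec.symm
    linear_combination (-(ψ p)) * this
  rw [integral_congr_ae (Filter.Eventually.of_forall hpt)]
  simp


/-! ### inclusion maps -/

noncomputable def Jst : (ℝ × E3) →L[ℝ] ℝ × E3 × NSpace :=
  (ContinuousLinearMap.fst ℝ ℝ E3).prod ((ContinuousLinearMap.inl ℝ E3 NSpace).comp
    (ContinuousLinearMap.snd ℝ ℝ E3))
noncomputable def Jt : ℝ →L[ℝ] ℝ × E3 × NSpace := Jst.comp (ContinuousLinearMap.inl ℝ ℝ E3)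
noncomputable def Jx : E3 →L[ℝ] ℝ × E3 × NSpace := Jst.comp (ContinuousLinearMap.inr ℝ ℝ E3)
noncomputable def iN : NSpace →L[ℝ] ℝ × E3 × NSpace :=
  (ContinuousLinearMap.inr ℝ ℝ (E3 × NSpace)).comp (ContinuousLinearMap.inr ℝ E3 NSpace)

@[simp] lemma Jst_apply (w : ℝ × E3) : Jst w = (w.1, w.2, 0) := rfl
@[simp] lemma Jt_apply (u : ℝ) : Jt u = (u, 0, 0) := rfl
@[simp] lemma Jx_apply (w : E3) : Jx w = (0, w, 0) := rfl
@[simp] lemma iN_apply (p : NSpace) : iN p = (0, 0, p) := rfl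

lemma hasFDerivAt_incl_tx (t : ℝ) (x : E3) (p₀ : NSpace) :
    HasFDerivAt (fun p : NSpace => ((t, x, p) : ℝ × E3 × NSpace)) iN p₀ := by
  have h : (fun p : NSpace => ((t, x, p) : ℝ × E3 × NSpace)) = fun p => iN p + (t, x, 0) := by
    funext p; simp [Prod.ext_iff]
  rw [h]; exact iN.hasFDerivAt.add_const _

lemma hasFDerivAt_incl_sy (p : NSpace) (sy₀ : ℝ × E3) :
    HasFDerivAt (fun sy : ℝ × E3 => ((sy.1, sy.2, p) : ℝ × E3 × NSpace)) Jst sy₀ := by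
  have h : (fun sy : ℝ × E3 => ((sy.1, sy.2, p) : ℝ × E3 × NSpace))
      = fun sy => Jst sy + (0, 0, p) := by
    funext sy; simp [Prod.ext_iff]
  rw [h]; exact Jst.hasFDerivAt.add_const _

lemma hasFDerivAt_incl_s (x : E3) (p : NSpace) (s₀ : ℝ) :
    HasFDerivAt (fun s : ℝ => ((s, x, p) : ℝ × E3 × NSpace)) Jt s₀ := by
  have h : (fun s : ℝ => ((s, x, p) : ℝ × E3 × NSpace)) = fun s => Jt s + (0, x, p) := by
    funext s; simp [Prod.ext_iff]
  rw [h]; exact Jt.hasFDerivAt.add_const _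

lemma hasFDerivAt_incl_y (t : ℝ) (p : NSpace) (y₀ : E3) :
    HasFDerivAt (fun y : E3 => ((t, y, p) : ℝ × E3 × NSpace)) Jx y₀ := by
  have h : (fun y : E3 => ((t, y, p) : ℝ × E3 × NSpace)) = fun y => Jx y + (t, 0, p) := by
    funext y; simp [Prod.ext_iff]
  rw [h]; exact Jx.hasFDerivAt.add_const _

lemma hlin (L : (ℝ × E3 × NSpace) →L[ℝ] ℝ) (c : E3) (w : NSpace) :
    L (1, c, w) = L (1, 0, 0) + (∑ i, c i * L (0, Pi.single i 1, 0)) + L (0, 0, w) := by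
  have hc : ((0:ℝ), c, (0:NSpace)) = ∑ i, c i • ((0:ℝ), (Pi.single i 1 : E3), (0:NSpace)) := by
    refine Prod.ext ?_ (Prod.ext ?_ ?_)
    · simp [Prod.fst_sum]
    · simpa [Prod.fst_sum, Prod.snd_sum] using e3_decomp c
    · simp [Prod.fst_sum, Prod.snd_sum]
  have h : ((1:ℝ), c, w) = ((1:ℝ), (0:E3), (0:NSpace)) + ((0:ℝ), c, (0:NSpace))
      + ((0:ℝ), (0:E3), w) := by
    refine Prod.ext ?_ (Prod.ext ?_ ?_) <;> simp
  rw [h, map_add, map_add, hc, map_sum]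
  simp only [ContinuousLinearMap.map_smul, smul_eq_mul]

end MomAux

open MomAux

set_option maxHeartbeats 2000000


/-- if a compactly supported (in `N`, locally uniformly in `(t,x)`)
C¹ density `φ(t, x, ν, n, j)` satisfies the kinetic equation
`∂φ/∂t + (ν × σ(n))·∇ₓφ + (ν × n)·∇ₙφ + Tr((∂φ/∂j)ᵀ [ν̂, j]) + div_ν(φ a) = 0`
(here: the directional derivative of `φ` in direction
`(1, ν × σ(n), 0, ν × n, [ν̂, j])` plus `∑ᵢ ∂(φ aᵢ)/∂νᵢ` vanishes), and a C¹
function `q(ν, n, j)` satisfies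
`∇ₙq·(ν × n) + ∇_νq·a + Tr((∂q/∂j)ᵀ [ν̂, j]) = 0`, then
`Q(t,x) = ∫_N q φ` satisfies the continuity equation
`∂Q/∂t + div_x ∫_N q φ (ν × σ(n)) = 0`. -/
theorem moment_continuity_equation (r : ℝ) (zhat : Fin 3 → ℝ)
    (a : ℝ × (Fin 3 → ℝ) × NSpace → Fin 3 → ℝ)
    (φ : ℝ × (Fin 3 → ℝ) × NSpace → ℝ)
    (q : NSpace → ℝ)
    (ha : ContDiff ℝ 1 a) (hφ : ContDiff ℝ 1 φ) (hq : ContDiff ℝ 1 q)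
    (hsupp : ∀ K : Set (ℝ × (Fin 3 → ℝ)), IsCompact K →
      ∃ C : Set NSpace, IsCompact C ∧
        ∀ tx ∈ K, Function.support (fun p : NSpace => φ (tx.1, tx.2, p)) ⊆ C)
    (hkin : ∀ u : ℝ × (Fin 3 → ℝ) × NSpace,
      fderiv ℝ φ u
          (1, crossProduct u.2.2.1 (r • zhat + u.2.2.2.1), 0,
            crossProduct u.2.2.1 u.2.2.2.1,
            Matrix.of.symm
              (hat u.2.2.1 * Matrix.of u.2.2.2.2 - Matrix.of u.2.2.2.2 * hat u.2.2.1))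
        + ∑ i, fderiv ℝ (fun v => φ v * a v i) u (0, 0, Pi.single i 1, 0, 0) = 0)
    (hqid : ∀ u : ℝ × (Fin 3 → ℝ) × NSpace,
      fderiv ℝ q u.2.2
          (a u, crossProduct u.2.2.1 u.2.2.2.1,
            Matrix.of.symm
              (hat u.2.2.1 * Matrix.of u.2.2.2.2 - Matrix.of u.2.2.2.2 * hat u.2.2.1)) = 0) :
    ∀ (t : ℝ) (x : Fin 3 → ℝ),
      (∀ i : Fin 3, DifferentiableAt ℝ
          (fun y => ∫ p : NSpace,
            q p * φ (t, y, p) * crossProduct p.1 (r • zhat + p.2.1) i ∂volume) x) ∧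
      HasDerivAt (fun s => ∫ p : NSpace, q p * φ (s, x, p) ∂volume)
        (-(∑ i, fderiv ℝ
            (fun y => ∫ p : NSpace,
              q p * φ (t, y, p) * crossProduct p.1 (r • zhat + p.2.1) i ∂volume)
            x (Pi.single i 1))) t := by
  intro t x
  have hφd := hφ.differentiable one_ne_zero
  have hφc := hφd.continuous
  have hφf : Continuous (fderiv ℝ φ) := hφ.continuous_fderiv one_ne_zero
  have hqc2 := hq.continuous
  obtain ⟨C, hCcomp, hCsupp⟩ := hsupp (Metric.closedBall t 1 ×ˢ Metric.closedBall x 1)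
    ((isCompact_closedBall _ _).prod (isCompact_closedBall _ _))
  have hCclosed := hCcomp.isClosed
  -- vanishing of φ off C
  have F1 : ∀ s y (p : NSpace), s ∈ Metric.closedBall t 1 → y ∈ Metric.closedBall x 1 →
      p ∉ C → φ (s, y, p) = 0 := by
    intro s y p hs hy hp
    by_contra hne
    exact hp (hCsupp (s, y) (Set.mk_mem_prod hs hy) (Function.mem_support.2 hne))
  -- vanishing of the (t,x)-part of the derivative off C
  have F2 : ∀ p ∉ C, ∀ s ∈ Metric.ball t 1, ∀ y ∈ Metric.ball x 1,
      (fderiv ℝ φ (s, y, p)).comp Jst = 0 := by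
    intro p hp s hs y hy
    have hfd : HasFDerivAt (fun sy : ℝ × E3 => φ (sy.1, sy.2, p))
        ((fderiv ℝ φ (s, y, p)).comp Jst) (s, y) :=
      (hφd _).hasFDerivAt.comp (s, y) (hasFDerivAt_incl_sy p (s, y))
    have hzero : (fun sy : ℝ × E3 => φ (sy.1, sy.2, p)) =ᶠ[nhds (s, y)]
        fun _ => (0 : ℝ) := by
      refine Filter.eventuallyEq_of_mem (IsOpen.mem_nhds
        (Metric.isOpen_ball.prod Metric.isOpen_ball) (Set.mk_mem_prod hs hy)) ?_
      intro sy hsy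
      exact F1 sy.1 sy.2 p (Metric.ball_subset_closedBall hsy.1)
        (Metric.ball_subset_closedBall hsy.2) hp
    calc (fderiv ℝ φ (s, y, p)).comp Jst
        = fderiv ℝ (fun sy : ℝ × E3 => φ (sy.1, sy.2, p)) (s, y) := hfd.fderiv.symm
      _ = fderiv ℝ (fun _ : ℝ × E3 => (0:ℝ)) (s, y) := hzero.fderiv_eq
      _ = 0 := fderiv_const_apply 0
  -- continuity of the flux weights
  have hccont : ∀ i : Fin 3, Continuous fun p : NSpace =>
      crossProduct p.1 (r • zhat + p.2.1) i := by
    intro i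
    have h : (fun p : NSpace => crossProduct p.1 (r • zhat + p.2.1) i)
        = fun p => p.1 (i+1) * (r * zhat (i+2) + p.2.1 (i+2))
          - p.1 (i+2) * (r * zhat (i+1) + p.2.1 (i+1)) := by
      funext p; rw [cross_eq]; simp
    rw [h]; fun_prop
  -- derivative of the integrand in `y`
  have hderY : ∀ (i : Fin 3) (y : E3) (p : NSpace),
      HasFDerivAt (fun y' => q p * φ (t, y', p) * crossProduct p.1 (r • zhat + p.2.1) i)
        ((q p * crossProduct p.1 (r • zhat + p.2.1) i) • ((fderiv ℝ φ (t, y, p)).comp Jx)) y := by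
    intro i y p
    have h1 : HasFDerivAt (fun y' => φ (t, y', p)) ((fderiv ℝ φ (t, y, p)).comp Jx) y :=
      (hφd _).hasFDerivAt.comp y (hasFDerivAt_incl_y t p y)
    have h2 := (h1.const_mul (q p)).mul_const (crossProduct p.1 (r • zhat + p.2.1) i)
    convert h2 using 1
    any_goals rfl
    rw [smul_smul, mul_comm]
  have hJxJst : ∀ A : (ℝ × E3 × NSpace) →L[ℝ] ℝ,
      A.comp Jx = (A.comp Jst).comp (ContinuousLinearMap.inr ℝ ℝ E3) := fun A => rfl
  have hJtJst : ∀ A : (ℝ × E3 × NSpace) →L[ℝ] ℝ,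
      A.comp Jt = (A.comp Jst).comp (ContinuousLinearMap.inl ℝ ℝ E3) := fun A => rfl
  have hF'x0 : ∀ (i : Fin 3), ∀ y ∈ Metric.ball x 1, ∀ p ∉ C,
      (q p * crossProduct p.1 (r • zhat + p.2.1) i) • ((fderiv ℝ φ (t, y, p)).comp Jx) = 0 := by
    intro i y hy p hp
    rw [hJxJst, F2 p hp t (Metric.mem_ball_self one_pos) y hy]
    simp
  have hcontF' : ∀ i : Fin 3, Continuous fun z : E3 × NSpace =>
      (q z.2 * crossProduct z.2.1 (r • zhat + z.2.2.1) i) • ((fderiv ℝ φ (t, z.1, z.2)).comp Jx) := by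
    intro i
    refine Continuous.fun_smul ?_ ?_
    · exact (hqc2.comp continuous_snd).mul ((hccont i).comp continuous_snd)
    · exact Continuous.clm_comp (hφf.comp (by fun_prop)) continuous_const
  have hGall : ∀ i : Fin 3,
      HasFDerivAt (fun y => ∫ p : NSpace,
          q p * φ (t, y, p) * crossProduct p.1 (r • zhat + p.2.1) i ∂volume)
        (∫ p : NSpace,
          (q p * crossProduct p.1 (r • zhat + p.2.1) i) • ((fderiv ℝ φ (t, x, p)).comp Jx)
          ∂volume) x := by
    intro i
    obtain ⟨M, hM⟩ := ((isCompact_closedBall x 1).prod hCcomp).exists_bound_of_continuousOn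
      (hcontF' i).continuousOn
    refine hasFDerivAt_integral_of_dominated_of_fderiv_le (s := Metric.ball x 1) (μ := volume)
      (F := fun y p => q p * φ (t, y, p) * crossProduct p.1 (r • zhat + p.2.1) i)
      (F' := fun y p => (q p * crossProduct p.1 (r • zhat + p.2.1) i) •
        ((fderiv ℝ φ (t, y, p)).comp Jx))
      (x₀ := x) (bound := Set.indicator C fun _ => |M|) (Metric.ball_mem_nhds x one_pos) ?_ ?_ ?_ ?_ ?_ ?_
    · exact Filter.Eventually.of_forall fun y =>
        ((hqc2.mul (hφc.comp (by fun_prop))).mul (hccont i)).aestronglyMeasurable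
    · refine Continuous.integrable_of_hasCompactSupport
        ((hqc2.mul (hφc.comp (by fun_prop))).mul (hccont i))
        (HasCompactSupport.intro hCcomp fun p hp => ?_)
      beta_reduce
      rw [F1 t x p (Metric.mem_closedBall_self zero_le_one)
        (Metric.mem_closedBall_self zero_le_one) hp]
      ring
    · exact ((hcontF' i).comp (continuous_const.prodMk continuous_id)).aestronglyMeasurable
    · refine Filter.Eventually.of_forall fun p y hy => ?_
      beta_reduce
      by_cases hp : p ∈ C
      · rw [Set.indicator_of_mem hp]
        exact le_trans (hM (y, p) (Set.mk_mem_prod (Metric.ball_subset_closedBall hy) hp))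
          (le_abs_self M)
      · rw [hF'x0 i y hy p hp, Set.indicator_of_notMem hp]
        simp
    · rw [integrable_indicator_iff hCclosed.measurableSet]
      exact integrableOn_const hCcomp.measure_lt_top.ne
    · exact Filter.Eventually.of_forall fun p y _ => hderY i y p
  have hGint : ∀ i : Fin 3, Integrable (fun p : NSpace =>
      (q p * crossProduct p.1 (r • zhat + p.2.1) i) • ((fderiv ℝ φ (t, x, p)).comp Jx)) volume := by
    intro i
    refine Continuous.integrable_of_hasCompactSupport
      ((hcontF' i).comp (continuous_const.prodMk continuous_id))
      (HasCompactSupport.intro hCcomp fun p hp => ?_)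
    exact hF'x0 i x (Metric.mem_ball_self one_pos) p hp
  have hGval : ∀ i : Fin 3,
      fderiv ℝ (fun y => ∫ p : NSpace,
          q p * φ (t, y, p) * crossProduct p.1 (r • zhat + p.2.1) i ∂volume) x (Pi.single i 1)
        = ∫ p : NSpace, q p * crossProduct p.1 (r • zhat + p.2.1) i
            * fderiv ℝ φ (t, x, p) (0, Pi.single i 1, 0) ∂volume := by
    intro i
    rw [(hGall i).fderiv, ContinuousLinearMap.integral_apply (hGint i)]
    refine integral_congr_ae (Filter.Eventually.of_forall fun p => ?_)
    simp [mul_assoc]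
  -- time-derivative of the integrand
  have hderT : ∀ (s : ℝ) (p : NSpace), HasDerivAt (fun s' => q p * φ (s', x, p))
      (q p * fderiv ℝ φ (s, x, p) ((1:ℝ), (0:E3), (0:NSpace))) s := by
    intro s p
    have h1 : HasFDerivAt (fun s' => φ (s', x, p)) ((fderiv ℝ φ (s, x, p)).comp Jt) s :=
      (hφd _).hasFDerivAt.comp s (hasFDerivAt_incl_s x p s)
    have h2 := h1.hasDerivAt.const_mul (q p)
    simpa using h2
  have hT0 : ∀ s ∈ Metric.ball t 1, ∀ p ∉ C,
      fderiv ℝ φ (s, x, p) ((1:ℝ), (0:E3), (0:NSpace)) = 0 := by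
    intro s hs p hp
    have h1 : fderiv ℝ φ (s, x, p) ((1:ℝ), (0:E3), (0:NSpace))
        = ((fderiv ℝ φ (s, x, p)).comp Jst) (1, 0) := rfl
    rw [h1, F2 p hp s hs x (Metric.mem_ball_self one_pos)]
    simp
  have hX0 : ∀ p ∉ C, ∀ w : E3, fderiv ℝ φ (t, x, p) ((0:ℝ), w, (0:NSpace)) = 0 := by
    intro p hp w
    have h1 : fderiv ℝ φ (t, x, p) ((0:ℝ), w, (0:NSpace))
        = ((fderiv ℝ φ (t, x, p)).comp Jst) (0, w) := rfl
    rw [h1, F2 p hp t (Metric.mem_ball_self one_pos) x (Metric.mem_ball_self one_pos)]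
    simp
  have hcontT : Continuous fun z : ℝ × NSpace =>
      q z.2 * fderiv ℝ φ (z.1, x, z.2) ((1:ℝ), (0:E3), (0:NSpace)) :=
    (hqc2.comp continuous_snd).mul ((hφf.comp (by fun_prop)).clm_apply continuous_const)
  have hDt : HasDerivAt (fun s => ∫ p : NSpace, q p * φ (s, x, p) ∂volume)
      (∫ p : NSpace, q p * fderiv ℝ φ (t, x, p) ((1:ℝ), (0:E3), (0:NSpace)) ∂volume) t := by
    obtain ⟨M, hM⟩ := ((isCompact_closedBall t 1).prod hCcomp).exists_bound_of_continuousOn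
      hcontT.continuousOn
    refine (hasDerivAt_integral_of_dominated_loc_of_deriv_le (s := Metric.ball t 1) (μ := volume)
      (F := fun s p => q p * φ (s, x, p))
      (F' := fun s p => q p * fderiv ℝ φ (s, x, p) ((1:ℝ), (0:E3), (0:NSpace)))
      (x₀ := t) (bound := Set.indicator C fun _ => |M|) (Metric.ball_mem_nhds t one_pos) ?_ ?_ ?_ ?_ ?_ ?_).2
    · exact Filter.Eventually.of_forall fun s =>
        (hqc2.mul (hφc.comp (by fun_prop))).aestronglyMeasurable
    · refine Continuous.integrable_of_hasCompactSupport
        (hqc2.mul (hφc.comp (by fun_prop)))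
        (HasCompactSupport.intro hCcomp fun p hp => ?_)
      beta_reduce
      rw [F1 t x p (Metric.mem_closedBall_self zero_le_one)
        (Metric.mem_closedBall_self zero_le_one) hp]
      ring
    · exact (hcontT.comp (continuous_const.prodMk continuous_id)).aestronglyMeasurable
    · refine Filter.Eventually.of_forall fun p s hs => ?_
      beta_reduce
      by_cases hp : p ∈ C
      · rw [Set.indicator_of_mem hp]
        exact le_trans (hM (s, p) (Set.mk_mem_prod (Metric.ball_subset_closedBall hs) hp))
          (le_abs_self M)
      · rw [hT0 s hs p hp, Set.indicator_of_notMem hp]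
        simp
    · rw [integrable_indicator_iff hCclosed.measurableSet]
      exact integrableOn_const hCcomp.measure_lt_top.ne
    · exact Filter.Eventually.of_forall fun p s _ => hderT s p
  -- restriction to N
  set ψ : NSpace → ℝ := fun p => φ (t, x, p) with hψdef
  set bb : Fin 3 → NSpace → ℝ := fun i p => a (t, x, p) i with hbbdef
  have hincl : ContDiff ℝ 1 (fun p : NSpace => ((t, x, p) : ℝ × E3 × NSpace)) :=
    contDiff_const.prodMk (contDiff_const.prodMk contDiff_id)
  have hψcd : ContDiff ℝ 1 ψ := hφ.comp hincl
  have hψcs : HasCompactSupport ψ := HasCompactSupport.intro hCcomp fun p hp =>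
    F1 t x p (Metric.mem_closedBall_self zero_le_one) (Metric.mem_closedBall_self zero_le_one) hp
  have hbbcd : ∀ i, ContDiff ℝ 1 (bb i) := fun i =>
    (ContinuousLinearMap.proj (R := ℝ) (φ := fun _ : Fin 3 => ℝ) i).contDiff.comp (ha.comp hincl)
  have hψfd : ∀ p : NSpace, fderiv ℝ ψ p = (fderiv ℝ φ (t, x, p)).comp iN := fun p =>
    ((hφd _).hasFDerivAt.comp p (hasFDerivAt_incl_tx t x p)).fderiv
  have hφa : ∀ i : Fin 3, Differentiable ℝ (fun v => φ v * a v i) := fun i =>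
    hφd.mul ((ContinuousLinearMap.proj (R := ℝ) (φ := fun _ : Fin 3 => ℝ) i).differentiable.comp
      (ha.differentiable one_ne_zero))
  have hψbfd : ∀ (i : Fin 3) (p : NSpace), fderiv ℝ (fun p' => ψ p' * bb i p') p
      = (fderiv ℝ (fun v => φ v * a v i) (t, x, p)).comp iN := fun i p =>
    (((hφa i) _).hasFDerivAt.comp p (hasFDerivAt_incl_tx t x p)).fderiv
  have hkey := key_N q ψ bb hq hψcd hψcs hbbcd (fun p => hqid (t, x, p))
  -- integrability of the two main families
  have hintA : Integrable (fun p : NSpace =>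
      q p * fderiv ℝ φ (t, x, p) ((1:ℝ), (0:E3), (0:NSpace))) volume := by
    refine Continuous.integrable_of_hasCompactSupport
      (hcontT.comp (continuous_const.prodMk continuous_id))
      (HasCompactSupport.intro hCcomp fun p hp => ?_)
    beta_reduce
    rw [hT0 t (Metric.mem_ball_self one_pos) p hp]
    ring
  have hintB : ∀ i : Fin 3, Integrable (fun p : NSpace =>
      q p * crossProduct p.1 (r • zhat + p.2.1) i
        * fderiv ℝ φ (t, x, p) ((0:ℝ), Pi.single i 1, (0:NSpace))) volume := by
    intro i
    refine Continuous.integrable_of_hasCompactSupport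
      (((hqc2.mul (hccont i))).mul ((hφf.comp (by fun_prop)).clm_apply continuous_const))
      (HasCompactSupport.intro hCcomp fun p hp => ?_)
    beta_reduce
    rw [hX0 p hp]
    ring
  -- the pointwise identity coming from the kinetic equation
  have hpoint : ∀ p : NSpace,
      q p * fderiv ℝ φ (t, x, p) ((1:ℝ), (0:E3), (0:NSpace))
        + ∑ i, q p * crossProduct p.1 (r • zhat + p.2.1) i
            * fderiv ℝ φ (t, x, p) ((0:ℝ), Pi.single i 1, (0:NSpace))
      = -(q p * fderiv ℝ ψ p (0, fun i => m1 i p, fun k l => m2 k l p)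
          + ∑ i, q p * fderiv ℝ (fun p' => ψ p' * bb i p') p (eν i)) := by
    intro p
    have hk := hkin (t, x, p)
    have hsplit := hlin (fderiv ℝ φ (t, x, p)) (crossProduct p.1 (r • zhat + p.2.1))
      ((0, fun i => m1 i p, fun k l => m2 k l p) : NSpace)
    have e1 : fderiv ℝ ψ p ((0, fun i => m1 i p, fun k l => m2 k l p) : NSpace)
        = fderiv ℝ φ (t, x, p)
            ((0:ℝ), (0:E3), ((0, fun i => m1 i p, fun k l => m2 k l p) : NSpace)) := by
      rw [hψfd p]; rfl
    have e2 : ∀ i : Fin 3, fderiv ℝ (fun p' => ψ p' * bb i p') p (eν i)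
        = fderiv ℝ (fun v => φ v * a v i) (t, x, p) (0, 0, Pi.single i 1, 0, 0) := by
      intro i
      rw [hψbfd i p]; rfl
    have hk' : fderiv ℝ φ (t, x, p)
        (1, crossProduct p.1 (r • zhat + p.2.1),
          ((0, fun i => m1 i p, fun k l => m2 k l p) : NSpace))
        = - ∑ i, fderiv ℝ (fun v => φ v * a v i) (t, x, p) (0, 0, Pi.single i 1, 0, 0) := by
      have hdireq : ((1, crossProduct p.1 (r • zhat + p.2.1),
          ((0, fun i => m1 i p, fun k l => m2 k l p) : NSpace)) : ℝ × E3 × NSpace)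
          = (1, crossProduct p.1 (r • zhat + p.2.1), 0, crossProduct p.1 p.2.1,
              Matrix.of.symm
                (hat p.1 * Matrix.of p.2.2 - Matrix.of p.2.2 * hat p.1)) := rfl
      rw [hdireq]
      linarith [hk]
    rw [e1]
    rw [show (∑ i, q p * fderiv ℝ (fun p' => ψ p' * bb i p') p (eν i))
        = q p * ∑ i, fderiv ℝ (fun v => φ v * a v i) (t, x, p) (0, 0, Pi.single i 1, 0, 0) from by
      rw [Finset.mul_sum]; exact Finset.sum_congr rfl fun i _ => by rw [e2]]
    rw [show (∑ i, q p * crossProduct p.1 (r • zhat + p.2.1) i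
          * fderiv ℝ φ (t, x, p) ((0:ℝ), Pi.single i 1, (0:NSpace)))
        = q p * ∑ i, crossProduct p.1 (r • zhat + p.2.1) i
            * fderiv ℝ φ (t, x, p) ((0:ℝ), Pi.single i 1, (0:NSpace)) from by
      rw [Finset.mul_sum]; exact Finset.sum_congr rfl fun i _ => by ring]
    linear_combination (-(q p)) * hsplit + (q p) * hk'
  -- put everything together
  have hsum : (∫ p : NSpace, q p * fderiv ℝ φ (t, x, p) ((1:ℝ), (0:E3), (0:NSpace)) ∂volume)
      + ∑ i, ∫ p : NSpace, q p * crossProduct p.1 (r • zhat + p.2.1) i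
          * fderiv ℝ φ (t, x, p) ((0:ℝ), Pi.single i 1, (0:NSpace)) ∂volume = 0 := by
    rw [← integral_finset_sum _ (fun i _ => hintB i),
      ← integral_add hintA (integrable_finset_sum _ fun i _ => hintB i)]
    rw [integral_congr_ae (Filter.Eventually.of_forall hpoint), integral_neg, hkey, neg_zero]
  constructor
  · exact fun i => (hGall i).differentiableAt
  · have hval : (∫ p : NSpace, q p * fderiv ℝ φ (t, x, p) ((1:ℝ), (0:E3), (0:NSpace)) ∂volume)
        = -(∑ i, fderiv ℝ
            (fun y => ∫ p : NSpace,
              q p * φ (t, y, p) * crossProduct p.1 (r • zhat + p.2.1) i ∂volume)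
            x (Pi.single i 1)) := by
      simp only [hGval]
      linarith [hsum]
    exact hval ▸ hDt
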